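/- In Q̃_aff, for any real affine root α = γ + kε, the identity 1 − δ_{t_{−α∨}} = γ A_α + γ A_{ε−α} − γ² A_α A_{ε−α} holds. -/
import Mathlib


/-- In `Q̃_aff`, for any real affine root `α = γ + kε` (with finite part
`γ`), the identity `1 − δ_{t_{−α∨}} = γ A_α + γ A_{ε−α} − γ² A_α A_{ε−α}` holds.
Here `t_{−α∨} = s_α s_{ε−α}`, `A_α = (1/γ)(δ_e − δ_{s_α})`, and
`A_{ε−α} = (1/(−γ))(δ_e − δ_{s_{ε−α}})` since the finite part of `ε−α` is `−γ`;
moreover `s_α(γ) = −γ`. -/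
theorem stmt9 {F A : Type*} [Field F] [Ring A]
    {G : Type*} [Group G] [MulSemiringAction G F]
    (ι : F →+* A) (δ : G → A)
    (hδmul : ∀ g h : G, δ (g * h) = δ g * δ h)
    (hδone : δ 1 = 1)
    (hcomm : ∀ (g : G) (f : F), δ g * ι f = ι (g • f) * δ g)
    -- s = s_α and s' = s_{ε−α}
    (s s' : G) (γ : F) (hγ : γ ≠ 0)
    (hsγ : s • γ = -γ)
    -- t_{−α∨} = s_α s_{ε−α}
    (t : G) (ht : t = s * s')
    (Aα Aε : A)
    (hAα : Aα = ι γ⁻¹ * (1 - δ s))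
    (hAε : Aε = ι (-γ)⁻¹ * (1 - δ s')) :
    1 - δ t = ι γ * Aα + ι γ * Aε - ι γ * ι γ * (Aα * Aε) := by
  subst ht hAα hAε
  rw [hδmul]
  have hγγ : ι γ * ι γ⁻¹ = 1 := by
    rw [← map_mul, mul_inv_cancel₀ hγ, map_one]
  have hγn : ι γ * ι (-γ)⁻¹ = -1 := by
    rw [← map_mul, show γ * (-γ)⁻¹ = -1 by field_simp, map_neg, map_one]
  have h3 : δ s * ι (-γ)⁻¹ = ι γ⁻¹ * δ s := by
    rw [hcomm]
    congr 2
    have hi : s • (-γ)⁻¹ = (s • (-γ))⁻¹ :=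
      map_inv₀ (MulSemiringAction.toRingHom G F s) (-γ)
    rw [hi, smul_neg, hsγ, neg_neg]
  have h1 : ι γ * (ι γ⁻¹ * (1 - δ s)) = 1 - δ s := by
    rw [← mul_assoc, hγγ, one_mul]
  have h2 : ι γ * (ι (-γ)⁻¹ * (1 - δ s')) = -(1 - δ s') := by
    rw [← mul_assoc, hγn, neg_one_mul]
  have h4 : ι γ * ι γ * (ι γ⁻¹ * (1 - δ s) * (ι (-γ)⁻¹ * (1 - δ s')))
      = -((1 + δ s) * (1 - δ s')) := by
    have e1 : (1 - δ s) * ι (-γ)⁻¹ = ι (-γ)⁻¹ - ι γ⁻¹ * δ s := by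
      rw [sub_mul, one_mul, h3]
    calc ι γ * ι γ * (ι γ⁻¹ * (1 - δ s) * (ι (-γ)⁻¹ * (1 - δ s')))
        = (ι γ * (ι γ * ι γ⁻¹) * ((1 - δ s) * ι (-γ)⁻¹)) * (1 - δ s') := by
          noncomm_ring
      _ = (ι γ * (ι (-γ)⁻¹ - ι γ⁻¹ * δ s)) * (1 - δ s') := by
          rw [hγγ, mul_one, e1]
      _ = (-1 - δ s) * (1 - δ s') := by
          have : ι γ * (ι (-γ)⁻¹ - ι γ⁻¹ * δ s) = -1 - δ s := by
            rw [mul_sub, hγn, ← mul_assoc, hγγ, one_mul]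
          rw [this]
      _ = -((1 + δ s) * (1 - δ s')) := by noncomm_ring
  rw [h1, h2, h4]
  noncomm_ring
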